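/- Let α, β, ρ, x0, ū be positive real numbers satisfying (β − ρ·x0)·ū − α·x0 > 0, let t_sw : (0, ∞) → ℝ be the function assigning to each terminal time t_f > 0 the unique switching time t_sw(t_f) ∈ (0, t_f) with F(t_sw(t_f)) = x0, and define the idle energy function E(t_f) = ū·(t_f − t_sw(t_f)). Then E is twice differentiable on (0, ∞) and its second derivative satisfies E″(t_f) = −(α²·β·x0·exp(α·t_sw(t_f)) / (ρ·x0 − β·exp(α·t_sw(t_f)))²)·(d t_sw/d t_f) < 0 for every t_f > 0. -/

import Mathlib

/-- `F τ` is the terminal value `x(t_f)` of the bilinear furnace model started at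
`x(0) = x0`, with input `u ≡ 0` on `[0, τ)` and `u ≡ ū` on `[τ, t_f]`. -/
noncomputable def F (α β ρ x0 ubar tf τ : ℝ) : ℝ :=
  Real.exp ((-α - ρ * ubar) * (tf - τ)) *
      (x0 * Real.exp (-α * τ) - β * ubar / (α + ρ * ubar)) +
    β * ubar / (α + ρ * ubar)

/-- Under assumption (A), the idle energy function
`E(t_f) = ū·(t_f − t_sw(t_f))` is twice differentiable on `(0, ∞)` with
`E″(t_f) = −(α²·β·x0·exp(α·t_sw(t_f)) / (ρ·x0 − β·exp(α·t_sw(t_f)))²)·t_sw′(t_f) < 0`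
for every `t_f > 0`. -/
theorem stmt_14 (α β ρ x0 ubar : ℝ)
    (hα : 0 < α) (hβ : 0 < β) (hρ : 0 < ρ) (hx0 : 0 < x0) (hu : 0 < ubar)
    (hA : (β - ρ * x0) * ubar - α * x0 > 0)
    (tsw : ℝ → ℝ)
    (htsw : ∀ tf : ℝ, 0 < tf →
      tsw tf ∈ Set.Ioo 0 tf ∧ F α β ρ x0 ubar tf (tsw tf) = x0)
    (E : ℝ → ℝ) (hE : ∀ tf, E tf = ubar * (tf - tsw tf)) :
    ∀ tf : ℝ, 0 < tf →
      DifferentiableAt ℝ E tf ∧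
      HasDerivAt (deriv E)
        (-(α ^ 2 * β * x0 * Real.exp (α * tsw tf) /
            (ρ * x0 - β * Real.exp (α * tsw tf)) ^ 2) * deriv tsw tf) tf ∧
      -(α ^ 2 * β * x0 * Real.exp (α * tsw tf) /
          (ρ * x0 - β * Real.exp (α * tsw tf)) ^ 2) * deriv tsw tf < 0 := by
  -- abbreviations
  set k : ℝ := α + ρ * ubar with hk_def
  have hk : 0 < k := by positivity
  set c : ℝ := β * ubar / k with hc_def
  have hcx : x0 < c := by
    rw [hc_def, lt_div_iff₀ hk]; nlinarith
  have hβρ : ρ * x0 < β := by nlinarith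
  -- basic facts about tsw values
  have hwlt : ∀ τ : ℝ, 0 < τ → x0 * Real.exp (-α * τ) < x0 := by
    intro τ hτ
    have : Real.exp (-α * τ) < 1 := by
      rw [Real.exp_lt_one_iff]; nlinarith
    nlinarith [Real.exp_pos (-α * τ)]
  have hpos1 : ∀ τ : ℝ, 0 < τ → 0 < c - x0 * Real.exp (-α * τ) := by
    intro τ hτ; have := hwlt τ hτ; linarith
  have hpos2 : 0 < c - x0 := by linarith
  -- the inverse function G
  set G : ℝ → ℝ := fun τ =>
    τ + (Real.log (c - x0 * Real.exp (-α * τ)) - Real.log (c - x0)) / k with hG_def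
  -- G (tsw y) = y for y > 0
  have hGs : ∀ y : ℝ, 0 < y → G (tsw y) = y := by
    intro y hy
    obtain ⟨⟨hs0, hsy⟩, hF⟩ := htsw y hy
    set s := tsw y
    have hcc : β * ubar / (α + ρ * ubar) = c := rfl
    rw [F, hcc] at hF
    have hexp : (-α - ρ * ubar) * (y - s) = -(k * (y - s)) := by rw [hk_def]; ring
    rw [hexp] at hF
    have h1 : Real.exp (-(k * (y - s))) * (c - x0 * Real.exp (-α * s)) = c - x0 := by
      nlinarith [hF]
    have hp1 := hpos1 s hs0
    have hlog := congrArg Real.log h1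
    rw [Real.log_mul (Real.exp_ne_zero _) (ne_of_gt hp1), Real.log_exp] at hlog
    have key : Real.log (c - x0 * Real.exp (-α * s)) - Real.log (c - x0) = k * (y - s) := by
      linarith
    show s + (Real.log (c - x0 * Real.exp (-α * s)) - Real.log (c - x0)) / k = y
    rw [key]
    field_simp
    ring
  -- derivative of G
  set gd : ℝ → ℝ := fun τ =>
    1 + (c - x0 * Real.exp (-α * τ))⁻¹ * (α * x0 * Real.exp (-α * τ)) / k with hgd_def
  have hgdpos : ∀ τ : ℝ, 0 < τ → 0 < gd τ := by
    intro τ hτ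
    have h1 := hpos1 τ hτ
    have : 0 < (c - x0 * Real.exp (-α * τ))⁻¹ * (α * x0 * Real.exp (-α * τ)) / k := by
      positivity
    rw [hgd_def]; dsimp only; linarith
  have hG' : ∀ τ : ℝ, 0 < τ → HasDerivAt G (gd τ) τ := by
    intro τ hτ
    have h1 : HasDerivAt (fun t : ℝ => -α * t) (-α) τ := by
      simpa using (hasDerivAt_id τ).const_mul (-α)
    have h2 : HasDerivAt (fun t : ℝ => Real.exp (-α * t))
        (Real.exp (-α * τ) * (-α)) τ := (Real.hasDerivAt_exp (-α * τ)).comp τ h1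
    have h3 : HasDerivAt (fun t : ℝ => c - x0 * Real.exp (-α * t))
        (α * x0 * Real.exp (-α * τ)) τ := by
      have := (hasDerivAt_const τ c).sub (h2.const_mul x0)
      exact this.congr_deriv (by ring)
    have h4 : HasDerivAt (fun t : ℝ => Real.log (c - x0 * Real.exp (-α * t)))
        ((c - x0 * Real.exp (-α * τ))⁻¹ * (α * x0 * Real.exp (-α * τ))) τ :=
      by have := (Real.hasDerivAt_log (hpos1 τ hτ).ne').comp τ h3; exact this
    have h5 := (hasDerivAt_id τ).add (((h4.sub_const (Real.log (c - x0)))).div_const k)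
    exact h5
  -- G is strictly monotone on Ioi 0
  have hGmono : StrictMonoOn G (Set.Ioi 0) := by
    apply strictMonoOn_of_deriv_pos (convex_Ioi 0)
    · exact fun τ hτ => ((hG' τ hτ).continuousAt).continuousWithinAt
    · intro τ hτ
      rw [interior_Ioi] at hτ
      rw [(hG' τ hτ).deriv]
      exact hgdpos τ hτ
  -- tsw is continuous on (0, ∞)
  have htsw_cont : ∀ y : ℝ, 0 < y → ContinuousAt tsw y := by
    intro y hy
    obtain ⟨⟨hs0, hsy⟩, _⟩ := htsw y hy
    rw [Metric.continuousAt_iff]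
    intro ε hε
    set ε' : ℝ := min ε (tsw y / 2) with hε'_def
    have hε'pos : 0 < ε' := lt_min hε (by linarith)
    have hε'le : ε' ≤ ε := min_le_left _ _
    have hε's : ε' ≤ tsw y / 2 := min_le_right _ _
    have hlo : (0:ℝ) < tsw y - ε' := by linarith
    have hhi : (0:ℝ) < tsw y + ε' := by linarith
    have hGlo : G (tsw y - ε') < y := by
      have := hGmono (Set.mem_Ioi.2 hlo) (Set.mem_Ioi.2 hs0) (by linarith)
      rwa [hGs y hy] at this
    have hGhi : y < G (tsw y + ε') := by
      have := hGmono (Set.mem_Ioi.2 hs0) (Set.mem_Ioi.2 hhi) (by linarith)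
      rwa [hGs y hy] at this
    refine ⟨min (min (G (tsw y + ε') - y) (y - G (tsw y - ε'))) y, lt_min (lt_min (by linarith) (by linarith)) hy, ?_⟩
    intro z hz
    rw [Real.dist_eq, abs_lt] at hz
    obtain ⟨hz1, hz2⟩ := hz
    have hz0 : 0 < z := by
      have : min (min (G (tsw y + ε') - y) (y - G (tsw y - ε'))) y ≤ y := min_le_right _ _
      linarith
    obtain ⟨⟨hzs0, _⟩, _⟩ := htsw z hz0
    have hGz : G (tsw z) = z := hGs z hz0
    have h1 : G (tsw z) < G (tsw y + ε') := by
      have : min (min (G (tsw y + ε') - y) (y - G (tsw y - ε'))) y ≤ G (tsw y + ε') - y :=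
        le_trans (min_le_left _ _) (min_le_left _ _)
      rw [hGz]; linarith
    have h2 : G (tsw y - ε') < G (tsw z) := by
      have : min (min (G (tsw y + ε') - y) (y - G (tsw y - ε'))) y ≤ y - G (tsw y - ε') :=
        le_trans (min_le_left _ _) (min_le_right _ _)
      rw [hGz]; linarith
    have hlt1 : tsw z < tsw y + ε' := by
      by_contra h
      push_neg at h
      rcases eq_or_lt_of_le h with h | h
      · rw [← h] at h1; exact lt_irrefl _ h1
      · exact absurd (hGmono (Set.mem_Ioi.2 hhi) (Set.mem_Ioi.2 hzs0) h) (by linarith)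
    have hlt2 : tsw y - ε' < tsw z := by
      by_contra h
      push_neg at h
      rcases eq_or_lt_of_le h with h | h
      · rw [h] at h2; exact lt_irrefl _ h2
      · exact absurd (hGmono (Set.mem_Ioi.2 hzs0) (Set.mem_Ioi.2 hlo) h) (by linarith)
    rw [Real.dist_eq, abs_lt]
    constructor <;> [linarith; linarith]
  -- derivative of tsw
  have htsw' : ∀ y : ℝ, 0 < y → HasDerivAt tsw (gd (tsw y))⁻¹ y := by
    intro y hy
    obtain ⟨⟨hs0, _⟩, _⟩ := htsw y hy
    refine HasDerivAt.of_local_left_inverse (htsw_cont y hy) (hG' (tsw y) hs0)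
      (ne_of_gt (hgdpos (tsw y) hs0)) ?_
    filter_upwards [Ioi_mem_nhds hy] with z hz
    exact hGs z hz
  -- derivative of E
  have hEfun : E = fun y => ubar * (y - tsw y) := funext hE
  have hE' : ∀ y : ℝ, 0 < y →
      HasDerivAt E (ubar * (1 - (gd (tsw y))⁻¹)) y := by
    intro y hy
    rw [hEfun]
    exact ((hasDerivAt_id y).sub (htsw' y hy)).const_mul ubar
  -- deriv E in closed form
  have hderivE : ∀ y : ℝ, 0 < y →
      deriv E y = α * x0 / (β * Real.exp (α * tsw y) - ρ * x0) := by
    intro y hy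
    obtain ⟨⟨hs0, _⟩, _⟩ := htsw y hy
    rw [(hE' y hy).deriv]
    set s := tsw y
    set w : ℝ := x0 * Real.exp (-α * s) with hw_def
    have hp1 : 0 < c - w := hpos1 s hs0
    have hw : 0 < w := by rw [hw_def]; positivity
    have hDp : 0 < β * Real.exp (α * s) - ρ * x0 := by
      have h1 : (1:ℝ) < Real.exp (α * s) := Real.one_lt_exp_iff.2 (by nlinarith)
      nlinarith
    have hβw : 0 < β - ρ * w := by
      have := hwlt s hs0; rw [hw_def]; nlinarith
    have hkc : k * c = β * ubar := by
      rw [hc_def]; field_simp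
    have hkk : k = α + ρ * ubar := hk_def
    have key : ubar * (β - ρ * w) = k * (c - w) + α * w := by
      linear_combination w * hkk - hkc
    have hgd_eq : gd s = (k * (c - w) + α * w) / (k * (c - w)) := by
      have h0 : gd s = 1 + (c - w)⁻¹ * (α * w) / k := by
        simp only [hgd_def, hw_def]; ring
      rw [h0]
      field_simp
    have hinv : (gd s)⁻¹ = (k * (c - w)) / (ubar * (β - ρ * w)) := by
      rw [hgd_eq, inv_div, key]
    rw [hinv]
    have hwE : w * Real.exp (α * s) = x0 := by
      rw [hw_def, mul_assoc, ← Real.exp_add]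
      norm_num
    clear_value k c s w
    have e2 : ubar * (k * (c - w) / (ubar * (β - ρ * w))) = k * (c - w) / (β - ρ * w) := by
      rw [← mul_div_assoc, mul_div_mul_left _ _ hu.ne']
    have hLHS : ubar * (1 - k * (c - w) / (ubar * (β - ρ * w))) = α * w / (β - ρ * w) := by
      rw [mul_sub, mul_one, e2, eq_div_iff hβw.ne', sub_mul,
        div_mul_cancel₀ _ hβw.ne']
      linear_combination key
    rw [hLHS, div_eq_div_iff hβw.ne' hDp.ne']
    linear_combination α * β * hwE
  intro tf htf
  obtain ⟨⟨hs0, hstf⟩, _⟩ := htsw tf htf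
  set s := tsw tf with hs_def
  have hderiv_tsw : deriv tsw tf = (gd s)⁻¹ := (htsw' tf htf).deriv
  have hgdp := hgdpos s hs0
  have hDp : 0 < β * Real.exp (α * s) - ρ * x0 := by
    have h1 : (1:ℝ) < Real.exp (α * s) := Real.one_lt_exp_iff.2 (by nlinarith)
    nlinarith
  clear_value G gd k c s
  refine ⟨(hE' tf htf).differentiableAt, ?_, ?_⟩
  · -- second derivative
    have heq : deriv E =ᶠ[nhds tf]
        fun y => α * x0 / (β * Real.exp (α * tsw y) - ρ * x0) := by
      filter_upwards [Ioi_mem_nhds htf] with z hz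
      exact hderivE z hz
    rw [Filter.EventuallyEq.hasDerivAt_iff heq]
    -- outer function derivative at s
    have h1 : HasDerivAt (fun t : ℝ => α * t) α s := by
      simpa using (hasDerivAt_id s).const_mul α
    have h2 : HasDerivAt (fun t : ℝ => Real.exp (α * t)) (Real.exp (α * s) * α) s :=
      (Real.hasDerivAt_exp (α * s)).comp s h1
    have h3 : HasDerivAt (fun t : ℝ => β * Real.exp (α * t) - ρ * x0)
        (β * (Real.exp (α * s) * α)) s := (h2.const_mul β).sub_const (ρ * x0)
    have h4 : HasDerivAt (fun t : ℝ => α * x0 / (β * Real.exp (α * t) - ρ * x0))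
        ((0 * (β * Real.exp (α * s) - ρ * x0) - α * x0 * (β * (Real.exp (α * s) * α))) /
          (β * Real.exp (α * s) - ρ * x0) ^ 2) s :=
      (hasDerivAt_const s (α * x0)).div h3 (ne_of_gt hDp)
    have hval : -(α ^ 2 * β * x0 * Real.exp (α * s) /
          (ρ * x0 - β * Real.exp (α * s)) ^ 2) * deriv tsw tf
        = (0 * (β * Real.exp (α * s) - ρ * x0) - α * x0 * (β * (Real.exp (α * s) * α))) /
            (β * Real.exp (α * s) - ρ * x0) ^ 2 * (gd s)⁻¹ := by
      rw [hderiv_tsw]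
      have hsq : (ρ * x0 - β * Real.exp (α * s)) ^ 2
          = (β * Real.exp (α * s) - ρ * x0) ^ 2 := by ring
      rw [hsq, ← neg_div]
      congr 2
      ring
    rw [hval]
    rw [hs_def] at h4 ⊢
    exact h4.comp tf (htsw' tf htf)
  · -- negativity
    rw [hderiv_tsw]
    apply mul_neg_of_neg_of_pos
    · have hnum : 0 < α ^ 2 * β * x0 * Real.exp (α * s) :=
        mul_pos (mul_pos (mul_pos (pow_pos hα 2) hβ) hx0) (Real.exp_pos _)
      have hden : 0 < (ρ * x0 - β * Real.exp (α * s)) ^ 2 := by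
        have h0 : ρ * x0 - β * Real.exp (α * s) < 0 := by linarith
        exact lt_of_le_of_ne (sq_nonneg _) (Ne.symm (pow_ne_zero 2 (ne_of_lt h0)))
      have : 0 < α ^ 2 * β * x0 * Real.exp (α * s) /
          (ρ * x0 - β * Real.exp (α * s)) ^ 2 := div_pos hnum hden
      linarith
    · exact inv_pos.2 hgdp
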